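/- arXiv:0811.2044 — 3 statements merged into one kernel-verified Lean document; each statement's English description precedes it below -/
import Mathlib

section
/- The function Φ(t) = t / log(e + t) is supermultiplicative: for all s, t ≥ 0, Φ(s·t) ≥ Φ(s)·Φ(t). -/
noncomputable def Phi (t : ℝ) : ℝ := t / Real.log (Real.exp 1 + t)

open Real

lemma one_le_log_aux {x : ℝ} (hx : 0 ≤ x) : 1 ≤ Real.log (Real.exp 1 + x) := by
  have h := Real.log_le_log (Real.exp_pos 1) (by linarith : Real.exp 1 ≤ Real.exp 1 + x)
  rwa [Real.log_exp] at h

lemma phi_aux (s t : ℝ) (hs : 0 ≤ s) (ht : 0 ≤ t) (hst : s ≤ t) :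
    Phi s * Phi t ≤ Phi (s * t) := by
  have e_pos : (0:ℝ) < Real.exp 1 := Real.exp_pos 1
  have ha1 : 1 ≤ Real.log (Real.exp 1 + s) := one_le_log_aux hs
  have hb1 : 1 ≤ Real.log (Real.exp 1 + t) := one_le_log_aux ht
  have hc1 : 1 ≤ Real.log (Real.exp 1 + s * t) := one_le_log_aux (mul_nonneg hs ht)
  by_cases hs1 : s ≤ 1
  · -- easy case: s ≤ 1
    have h1 : Phi s ≤ s := div_le_self hs ha1
    have h2 : 0 ≤ Phi t := div_nonneg ht (by linarith)
    have hstt : s * t ≤ t := by nlinarith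
    have hlog : Real.log (Real.exp 1 + s * t) ≤ Real.log (Real.exp 1 + t) :=
      Real.log_le_log (by nlinarith) (by linarith)
    calc Phi s * Phi t ≤ s * Phi t := mul_le_mul_of_nonneg_right h1 h2
      _ = s * t / Real.log (Real.exp 1 + t) := by rw [Phi]; ring
      _ ≤ s * t / Real.log (Real.exp 1 + s * t) :=
          div_le_div_of_nonneg_left (mul_nonneg hs ht) (by linarith) hlog
      _ = Phi (s * t) := rfl
  · -- hard case: 1 ≤ s ≤ t
    push_neg at hs1
    have hs1' : (1:ℝ) ≤ s := hs1.le
    have ht1 : (1:ℝ) ≤ t := hs1'.trans hst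
    set a := Real.log (Real.exp 1 + s) with ha_def
    set b := Real.log (Real.exp 1 + t) with hb_def
    set c := Real.log (Real.exp 1 + s * t) with hc_def
    have hab : a ≤ b := Real.log_le_log (by linarith) (by linarith)
    -- step 1 : c ≤ log s + b
    have hsum : Real.exp 1 + s * t ≤ s * (Real.exp 1 + t) := by nlinarith
    have h1 : c ≤ Real.log s + b := by
      have := Real.log_le_log (by nlinarith) hsum
      rwa [Real.log_mul (by linarith) (by linarith)] at this
    -- step 2 : 2a ≥ log 4 + 1 + log s
    have hsq : 4 * Real.exp 1 * s ≤ (Real.exp 1 + s) ^ 2 := by nlinarith [sq_nonneg (Real.exp 1 - s)]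
    have h2 : Real.log 4 + 1 + Real.log s ≤ 2 * a := by
      have hlog := Real.log_le_log (by positivity) hsq
      rw [Real.log_mul (by positivity) (by linarith), Real.log_mul (by norm_num) e_pos.ne',
        Real.log_exp, Real.log_pow] at hlog
      push_cast at hlog
      linarith
    have hlog4 : (5:ℝ)/4 ≤ Real.log 4 := by
      have h4 : (4:ℝ) = 2 ^ 2 := by norm_num
      rw [h4, Real.log_pow]
      have := Real.log_two_gt_d9
      push_cast
      linarith
    -- combine : c ≤ a * b
    have key : c ≤ a * b := by
      nlinarith [sq_nonneg (2 * a - 3), mul_nonneg (by linarith : (0:ℝ) ≤ a - 1) (by linarith : (0:ℝ) ≤ b - a)]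
    have hc0 : 0 < c := by linarith
    calc Phi s * Phi t = s * t / (a * b) := by rw [Phi, Phi, div_mul_div_comm]
      _ ≤ s * t / c := div_le_div_of_nonneg_left (mul_nonneg hs ht) hc0 key
      _ = Phi (s * t) := rfl

theorem phi_supermultiplicative (s t : ℝ) (hs : 0 ≤ s) (ht : 0 ≤ t) :
    Phi s * Phi t ≤ Phi (s * t) := by
  rcases le_total s t with h | h
  · exact phi_aux s t hs ht h
  · have := phi_aux t s ht hs h
    rwa [mul_comm (Phi t), mul_comm t] at this
end

section
/- For all s, t > 0 one has Φ(s·t) ≤ s + e^t − 1, where Φ(t) = t / log(e + t). -/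
theorem phi_conjugate_bound (s t : ℝ) (hs : 0 < s) (ht : 0 < t) :
    Phi (s * t) ≤ s + Real.exp t - 1 := by
  have hst : 0 < s * t := mul_pos hs ht
  have he : (0:ℝ) < Real.exp 1 + s * t := by positivity
  have hL1 : 1 < Real.log (Real.exp 1 + s * t) := by
    have : Real.exp 1 < Real.exp 1 + s * t := by linarith
    calc (1:ℝ) = Real.log (Real.exp 1) := (Real.log_exp 1).symm
    _ < Real.log (Real.exp 1 + s * t) := Real.log_lt_log (Real.exp_pos 1) this
  have hL0 : 0 < Real.log (Real.exp 1 + s * t) := by linarith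
  unfold Phi
  rcases le_or_gt t (Real.log (Real.exp 1 + s * t)) with h | h
  · have h1 : s * t / Real.log (Real.exp 1 + s * t) ≤ s := by
      rw [div_le_iff₀ hL0]
      have := mul_le_mul_of_nonneg_left h hs.le
      linarith
    have h2 : (1:ℝ) ≤ Real.exp t := by
      calc (1:ℝ) = Real.exp 0 := (Real.exp_zero).symm
      _ ≤ Real.exp t := Real.exp_le_exp.2 ht.le
    linarith
  · have hexp : Real.exp 1 + s * t < Real.exp t := by
      calc Real.exp 1 + s * t = Real.exp (Real.log (Real.exp 1 + s * t)) :=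
        (Real.exp_log he).symm
      _ < Real.exp t := Real.exp_lt_exp.2 h
    have he1 : (1:ℝ) ≤ Real.exp 1 := by
      calc (1:ℝ) = Real.exp 0 := (Real.exp_zero).symm
      _ ≤ Real.exp 1 := Real.exp_le_exp.2 zero_le_one
    have h1 : s * t / Real.log (Real.exp 1 + s * t) ≤ s * t := by
      rw [div_le_iff₀ hL0]
      nlinarith
    linarith
end

section
/- For all s, t, d > 0, Φ(s·t) ≤ log(e + d) · ( s + (1/d)(e^t − 1) ), where Φ(t) = t / log(e + t). -/
lemma aux_deriv_nonneg (b x : ℝ) (hb : 1 ≤ b) (hx : 1 ≤ x) :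
    0 ≤ b * Real.exp (x * b) + Real.exp (1 + x) - Real.exp (x + b) := by
  have h1 : x + b - 1 ≤ x * b := by nlinarith
  have h2 : Real.exp (x + b - 1) ≤ Real.exp (x * b) := Real.exp_le_exp.mpr h1
  have h3 : Real.exp (x + b - 1) = Real.exp (x + b) / Real.exp 1 := by
    rw [eq_div_iff (Real.exp_ne_zero 1), ← Real.exp_add]; ring_nf
  have h4 : Real.exp (1 + x) = Real.exp (x + b) * Real.exp (1 - b) := by
    rw [← Real.exp_add]; ring_nf
  -- key: b / e + exp (1 - b) ≥ 1
  have h5 : 3 - b ≤ Real.exp (2 - b) := by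
    have := Real.add_one_le_exp (2 - b); linarith
  have h6 : Real.exp (1 - b) = Real.exp (2 - b) / Real.exp 1 := by
    rw [eq_div_iff (Real.exp_ne_zero 1), ← Real.exp_add]; ring_nf
  have he : (2.7 : ℝ) < Real.exp 1 := by
    have := Real.exp_one_gt_d9; linarith
  have he3 : Real.exp 1 ≤ 3 := by
    have := Real.exp_one_lt_d9; linarith
  have hepos : (0 : ℝ) < Real.exp 1 := Real.exp_pos 1
  have hxb : 0 < Real.exp (x + b) := Real.exp_pos _
  -- b/e + exp(1-b) ≥ 1
  have key : 1 ≤ b / Real.exp 1 + Real.exp (1 - b) := by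
    rw [h6]
    rw [← add_div, le_div_iff₀ hepos, one_mul]
    linarith
  have h7 : Real.exp (x + b) ≤ b * Real.exp (x * b) + Real.exp (1 + x) := by
    have hbe : b * Real.exp (x + b - 1) = (b / Real.exp 1) * Real.exp (x + b) := by
      rw [h3]; ring
    have : Real.exp (x + b) * 1 ≤ Real.exp (x + b) * (b / Real.exp 1 + Real.exp (1 - b)) :=
      mul_le_mul_of_nonneg_left key hxb.le
    have h8 : b * Real.exp (x + b - 1) ≤ b * Real.exp (x * b) :=
      mul_le_mul_of_nonneg_left h2 (by linarith)
    rw [h4]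
    nlinarith
  linarith

lemma aux_key (a b : ℝ) (ha : 1 ≤ a) (hb : 1 ≤ b) :
    Real.exp (a + b) + Real.exp 1 + Real.exp 2
      ≤ Real.exp (a * b) + Real.exp (1 + a) + Real.exp (1 + b) := by
  set f : ℝ → ℝ := fun x => Real.exp (x * b) + Real.exp (1 + x) - Real.exp (x + b) with hf
  have hderiv : ∀ x : ℝ, HasDerivAt f
      (b * Real.exp (x * b) + Real.exp (1 + x) - Real.exp (x + b)) x := by
    intro x
    have d1 : HasDerivAt (fun x : ℝ => Real.exp (x * b)) (Real.exp (x * b) * b) x := by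
      simpa using ((hasDerivAt_id x).mul_const b).exp
    have d2 : HasDerivAt (fun x : ℝ => Real.exp (1 + x)) (Real.exp (1 + x) * 1) x := by
      simpa using ((hasDerivAt_const x (1:ℝ)).add (hasDerivAt_id x)).exp
    have d3 : HasDerivAt (fun x : ℝ => Real.exp (x + b)) (Real.exp (x + b) * 1) x :=
      ((hasDerivAt_id x).add_const b).exp
    have := (d1.add d2).sub d3
    exact this.congr_deriv (by ring)
  have hmono : MonotoneOn f (Set.Ici (1:ℝ)) := by
    apply monotoneOn_of_deriv_nonneg (convex_Ici 1)
    · exact (Continuous.continuousOn (by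
        fun_prop))
    · intro x hx
      exact (hderiv x).differentiableAt.differentiableWithinAt
    · intro x hx
      rw [interior_Ici] at hx
      rw [(hderiv x).deriv]
      exact aux_deriv_nonneg b x hb (le_of_lt hx)
  have h := hmono (Set.mem_Ici.mpr le_rfl) (Set.mem_Ici.mpr ha) ha
  simp only [hf] at h
  have e1 : Real.exp (1 + b) = Real.exp (1 + b) := rfl
  have h2 : Real.exp ((1:ℝ) * b) = Real.exp b := by rw [one_mul]
  have h3 : Real.exp ((1:ℝ) + 1) = Real.exp 2 := by norm_num
  rw [h2, h3] at h
  have hb' : Real.exp 1 ≤ Real.exp b := Real.exp_le_exp.mpr hb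
  have : Real.exp (1 + b) = Real.exp (b + 1) := by ring_nf
  linarith

lemma aux_core (d x : ℝ) (hd : 0 < d) (hx : 0 < x) :
    Real.exp 1 + d * x ≤ Real.exp (Real.log (Real.exp 1 + d) * Real.log (Real.exp 1 + x)) := by
  set a := Real.log (Real.exp 1 + d) with hA
  set b := Real.log (Real.exp 1 + x) with hB
  have hepos : (0:ℝ) < Real.exp 1 := Real.exp_pos 1
  have ha : 1 ≤ a := by
    have : Real.exp 1 ≤ Real.exp 1 + d := by linarith
    calc (1:ℝ) = Real.log (Real.exp 1) := (Real.log_exp 1).symm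
    _ ≤ a := Real.log_le_log hepos this
  have hb : 1 ≤ b := by
    have : Real.exp 1 ≤ Real.exp 1 + x := by linarith
    calc (1:ℝ) = Real.log (Real.exp 1) := (Real.log_exp 1).symm
    _ ≤ b := Real.log_le_log hepos this
  have hea : Real.exp a = Real.exp 1 + d := Real.exp_log (by linarith)
  have heb : Real.exp b = Real.exp 1 + x := Real.exp_log (by linarith)
  have hkey := aux_key a b ha hb
  have h1 : Real.exp (a + b) = Real.exp a * Real.exp b := Real.exp_add a b
  have h2 : Real.exp (1 + a) = Real.exp 1 * Real.exp a := Real.exp_add 1 a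
  have h3 : Real.exp (1 + b) = Real.exp 1 * Real.exp b := Real.exp_add 1 b
  have h4 : Real.exp 2 = Real.exp 1 * Real.exp 1 := by
    rw [← Real.exp_add]; norm_num
  nlinarith [hkey, hea, heb]

theorem phi_weighted_conjugate_bound (s t d : ℝ) (hs : 0 < s) (ht : 0 < t) (hd : 0 < d) :
    Phi (s * t) ≤ Real.log (Real.exp 1 + d) * (s + (1 / d) * (Real.exp t - 1)) := by
  unfold Phi
  set a := Real.log (Real.exp 1 + d) with hA
  set b := Real.log (Real.exp 1 + s * t) with hB
  have hepos : (0:ℝ) < Real.exp 1 := Real.exp_pos 1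
  have hst : 0 < s * t := mul_pos hs ht
  have ha : 1 ≤ a := by
    calc (1:ℝ) = Real.log (Real.exp 1) := (Real.log_exp 1).symm
    _ ≤ a := Real.log_le_log hepos (by linarith)
  have hb : 1 ≤ b := by
    calc (1:ℝ) = Real.log (Real.exp 1) := (Real.log_exp 1).symm
    _ ≤ b := Real.log_le_log hepos (by linarith)
  have hbpos : 0 < b := by linarith
  have hexpt : 1 < Real.exp t := by
    calc (1:ℝ) = Real.exp 0 := (Real.exp_zero).symm
    _ < Real.exp t := Real.exp_lt_exp.mpr ht
  rcases le_or_gt t (a * b) with hcase | hcase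
  · -- t ≤ a*b : Φ(st) ≤ a*s
    have h1 : s * t / b ≤ a * s := by
      rw [div_le_iff₀ hbpos]
      nlinarith
    have h2 : 0 ≤ a * ((1 / d) * (Real.exp t - 1)) := by
      have h0 : (0:ℝ) < 1 / d := by positivity
      exact mul_nonneg (by linarith) (mul_nonneg h0.le (by linarith))
    nlinarith
  · -- t > a*b : exp t > e + d*s*t, so (1/d)(exp t - 1) ≥ s*t ≥ Φ(st)
    have hcore := aux_core d (s * t) hd hst
    have h1 : Real.exp (a * b) < Real.exp t := Real.exp_lt_exp.mpr hcase
    rw [← hA, ← hB] at hcore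
    have h2 : d * (s * t) ≤ Real.exp t - 1 := by nlinarith [Real.add_one_le_exp (1:ℝ)]
    have h3 : s * t ≤ (1 / d) * (Real.exp t - 1) := by
      rw [show (1 / d) * (Real.exp t - 1) = (Real.exp t - 1) / d by ring, le_div_iff₀ hd]
      nlinarith
    have h4 : s * t / b ≤ s * t := by
      apply div_le_self hst.le hb
    nlinarith [mul_le_mul_of_nonneg_left h3 (by linarith : (0:ℝ) ≤ a)]
end
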